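/- Let k ≥ 2 and n ≥ 1, and let r_k be the pattern k (k−1) ⋯ 2 1 (k+1) of length k+1. If π is a permutation of {1,…,n} avoiding 123 and r_k, and π(j) = n, then j ≤ k. -/
import Mathlib


/-- A permutation `σ` of `{1,…,n}` contains the pattern `τ` (given in one-line
notation as a function `Fin k → ℕ`) if there is a strictly increasing choice of
indices along which `σ` is order-isomorphic to `τ`. -/
def Contains {n k : ℕ} (σ : Equiv.Perm (Fin n)) (τ : Fin k → ℕ) : Prop :=
  ∃ f : Fin k → Fin n, StrictMono f ∧ ∀ a b : Fin k, σ (f a) < σ (f b) ↔ τ a < τ b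

/-- `σ` avoids the pattern `τ`. -/
def Avoids {n k : ℕ} (σ : Equiv.Perm (Fin n)) (τ : Fin k → ℕ) : Prop :=
  ¬ Contains σ τ

def p123 : Fin 3 → ℕ := ![1, 2, 3]
def p132 : Fin 3 → ℕ := ![1, 3, 2]
def p213 : Fin 3 → ℕ := ![2, 1, 3]
def p1432 : Fin 4 → ℕ := ![1, 4, 3, 2]
def p3214 : Fin 4 → ℕ := ![3, 2, 1, 4]
def p2143 : Fin 4 → ℕ := ![2, 1, 4, 3]

/-- The pattern `q_k = 1 (k+1) k (k-1) ⋯ 2` of length `k+1` (one-line notation,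
position `j` is 0-indexed here, values 1-indexed). -/
def qpat (k : ℕ) : Fin (k + 1) → ℕ := fun j => if j.val = 0 then 1 else k + 2 - j.val

/-- The pattern `r_k = k (k-1) ⋯ 2 1 (k+1)` of length `k+1`. -/
def rpat (k : ℕ) : Fin (k + 1) → ℕ := fun j => if j.val = k then k + 1 else k - j.val

/-- The pattern `s_k = (k-1)(k-2) ⋯ 2 1 (k+1) k` of length `k+1`. -/
def spat (k : ℕ) : Fin (k + 1) → ℕ := fun j =>
  if j.val = k - 1 then k + 1 else if j.val = k then k else k - 1 - j.val

/-- The pattern `u_k = 2 1 (k+1) k (k-1) ⋯ 4 3` of length `k+1`. -/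
def upat (k : ℕ) : Fin (k + 1) → ℕ := fun j =>
  if j.val = 0 then 2 else if j.val = 1 then 1 else k + 3 - j.val

def gfun (k n : ℕ) (j : Fin n) (hkj : k ≤ j.val) : Fin (k + 1) → Fin n :=
  fun i => if hi : i.val < k then ⟨i.val, by omega⟩ else j

theorem gfun_lt {k n : ℕ} {j : Fin n} (hkj : k ≤ j.val) {i : Fin (k + 1)}
    (hi : i.val < k) : gfun k n j hkj i = ⟨i.val, by omega⟩ := dif_pos hi

theorem gfun_last {k n : ℕ} {j : Fin n} (hkj : k ≤ j.val) {i : Fin (k + 1)}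
    (hi : ¬ i.val < k) : gfun k n j hkj i = j := dif_neg hi

theorem mk2eq (h : 2 < 3) : (⟨2, h⟩ : Fin 3) = 2 := rfl

theorem stmt10 (k n : ℕ) (hk : 2 ≤ k) (hn : 1 ≤ n) (π : Equiv.Perm (Fin n))
    (h1 : Avoids π p123) (h2 : Avoids π (rpat k)) :
    ∀ j : Fin n, (π j).val = n - 1 → j.val + 1 ≤ k := by
  intro j hj
  by_contra hcon
  have hkj : k ≤ j.val := by omega
  have hjn : j.val < n := j.isLt
  have hmax : ∀ x : Fin n, x ≠ j → π x < π j := by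
    intro x hx
    have hx1 : (π x).val < n := (π x).isLt
    have hx2 : (π x).val ≠ (π j).val := fun h => hx (π.injective (Fin.ext h))
    rw [Fin.lt_def]; omega
  have hdec : ∀ a b : Fin n, a < b → b < j → π b < π a := by
    intro a b hab hbj
    by_contra hc
    push_neg at hc
    have hne : π a ≠ π b := fun h => (ne_of_lt hab) (π.injective h)
    have hlt : π a < π b := lt_of_le_of_ne hc hne
    have haj : a < j := hab.trans hbj
    have h3 : π a < π j := hmax a (ne_of_lt haj)
    have h4 : π b < π j := hmax b (ne_of_lt hbj)
    apply h1
    refine ⟨![a, b, j], ?_, ?_⟩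
    · intro x y hxy
      fin_cases x <;> fin_cases y <;>
        simp only [Matrix.cons_val_zero, Matrix.cons_val_one, Matrix.head_cons,
          Matrix.cons_val_two, Matrix.tail_cons, Fin.isValue, Fin.mk_one, Fin.mk_zero, mk2eq] <;>
        first
          | exact hab | exact hbj | exact haj
          | exact absurd hxy (by decide)
    · rw [Fin.lt_def] at hlt h3 h4
      intro x y
      fin_cases x <;> fin_cases y <;>
        simp only [p123, Fin.mk_zero, Fin.mk_one, mk2eq, Fin.isValue,
          Matrix.cons_val_zero, Matrix.cons_val_one, Matrix.head_cons,
          Matrix.cons_val_two, Matrix.tail_cons, Fin.lt_def] <;>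
        omega
  have hcmp : ∀ a b : Fin n, a < j → b < j → (π a < π b ↔ b < a) := by
    intro a b haj hbj
    constructor
    · intro h
      rcases lt_trichotomy a b with h' | h' | h'
      · exact absurd (hdec a b h' hbj) (asymm h)
      · exact absurd h (h' ▸ lt_irrefl _)
      · exact h'
    · intro h; exact hdec b a h haj
  apply h2
  refine ⟨gfun k n j hkj, ?_, ?_⟩
  · intro x y hxy
    rw [Fin.lt_def] at hxy
    have hy1 : y.val ≤ k := by omega
    by_cases hy : y.val < k
    · have hx : x.val < k := by omega
      rw [gfun_lt hkj hx, gfun_lt hkj hy]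
      exact Fin.mk_lt_mk.mpr hxy
    · rw [gfun_last hkj hy]
      have hx : x.val < k := by omega
      rw [gfun_lt hkj hx]
      exact Fin.lt_def.mpr (show x.val < j.val by omega)
  · intro a b
    have ha1 : a.val ≤ k := by omega
    have hb1 : b.val ≤ k := by omega
    by_cases ha : a.val < k <;> by_cases hb : b.val < k
    · rw [gfun_lt hkj ha, gfun_lt hkj hb,
        hcmp _ _ (Fin.lt_def.mpr (show a.val < j.val by omega))
          (Fin.lt_def.mpr (show b.val < j.val by omega)),
        Fin.mk_lt_mk]
      simp only [rpat]
      rw [if_neg (by omega), if_neg (by omega)]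
      omega
    · rw [gfun_lt hkj ha, gfun_last hkj hb]
      have hlt : (⟨a.val, by omega⟩ : Fin n) < j :=
        Fin.lt_def.mpr (show a.val < j.val by omega)
      have hm := hmax ⟨a.val, by omega⟩ (ne_of_lt hlt)
      simp only [rpat]
      rw [if_neg (by omega), if_pos (by omega)]
      constructor
      · intro _; omega
      · intro _; exact hm
    · rw [gfun_last hkj ha, gfun_lt hkj hb]
      have hlt : (⟨b.val, by omega⟩ : Fin n) < j :=
        Fin.lt_def.mpr (show b.val < j.val by omega)
      have hm := hmax ⟨b.val, by omega⟩ (ne_of_lt hlt)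
      simp only [rpat]
      rw [if_pos (by omega), if_neg (by omega)]
      constructor
      · intro h; exact absurd h (asymm hm)
      · intro h; omega
    · rw [gfun_last hkj ha, gfun_last hkj hb]
      simp only [rpat]
      rw [if_pos (by omega), if_pos (by omega)]
      simp
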